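/- Let X be a Noetherian topological space, Y a finite set, and f : X → Y a function. Then f^{-1}(y) is constructible for every y ∈ Y if and only if for every closed irreducible subset X' ⊆ X there exists a nonempty open subset U of X' such that f restricted to U is constant. -/

import Mathlib

open Set TopologicalSpace

variable {X : Type*} [TopologicalSpace X]

/-- A set is locally closed iff it is the difference of two closed sets. -/
def PaperLocallyClosed (s : Set X) : Prop :=
  ∃ V W : Set X, IsClosed V ∧ IsClosed W ∧ s = V \ W

/-- A set is constructible iff it is a finite union of locally closed sets. -/
def PaperConstructible (s : Set X) : Prop :=
  ∃ (m : ℕ) (V : Fin m → Set X), (∀ i, PaperLocallyClosed (V i)) ∧ s = ⋃ i, V i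

/-- `T` is an irreducible component of `V`: a maximal irreducible closed subset of `V`. -/
def IsIrredCompOf (T V : Set X) : Prop :=
  IsClosed T ∧ IsIrreducible T ∧ T ⊆ V ∧
    ∀ T' : Set X, IsClosed T' → IsIrreducible T' → T' ⊆ V → T ⊆ T' → T' = T

lemma PaperConstructible.empty : PaperConstructible (∅ : Set X) :=
  ⟨0, Fin.elim0, fun i => i.elim0, by simp⟩

lemma PaperLocallyClosed.constructible {s : Set X} (h : PaperLocallyClosed s) :
    PaperConstructible s :=
  ⟨1, fun _ => s, fun _ => h, by simp [iUnion_const]⟩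

lemma PaperConstructible.union {s t : Set X} (hs : PaperConstructible s)
    (ht : PaperConstructible t) : PaperConstructible (s ∪ t) := by
  obtain ⟨m, V, hV, rfl⟩ := hs
  obtain ⟨n, W, hW, rfl⟩ := ht
  refine ⟨m + n, Fin.addCases V W, ?_, ?_⟩
  · intro i
    induction i using Fin.addCases with
    | left j => simpa using hV j
    | right j => simpa using hW j
  · ext x
    simp only [mem_iUnion, mem_union]
    constructor
    · rintro (⟨j, hj⟩ | ⟨j, hj⟩)
      · exact ⟨Fin.castAdd n j, by simpa using hj⟩
      · exact ⟨Fin.natAdd m j, by simpa using hj⟩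
    · rintro ⟨i, hi⟩
      induction i using Fin.addCases with
      | left j => exact Or.inl ⟨j, by simpa using hi⟩
      | right j => exact Or.inr ⟨j, by simpa using hi⟩

theorem constructible_fibers_iff_generically_constant
    {X : Type*} [TopologicalSpace X] [NoetherianSpace X]
    {Y : Type*} [Finite Y] (f : X → Y) :
    (∀ y : Y, PaperConstructible (f ⁻¹' {y})) ↔
      (∀ X' : Set X, IsClosed X' → IsIrreducible X' →
        ∃ U : Set X, IsOpen U ∧ (X' ∩ U).Nonempty ∧
          ∀ a ∈ X' ∩ U, ∀ b ∈ X' ∩ U, f a = f b) := by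
  classical
  constructor
  · -- constructible fibers → generically constant
    intro h X' hX'c hX'irr
    choose m V hV hfib using h
    -- for each y, i : Fin (m y), pieces V y i = A y i \ B y i
    choose A B hA hB hVAB using fun y => hV y
    set ι := Σ y : Y, Fin (m y)
    haveI : Fintype Y := Fintype.ofFinite Y
    haveI : Fintype ι := by infer_instance
    have hcover : X' ⊆ ⋃ j : ι, closure (X' ∩ V j.1 j.2) := by
      intro x hx
      have : x ∈ f ⁻¹' {f x} := rfl
      rw [hfib (f x)] at this
      obtain ⟨i, hi⟩ := mem_iUnion.mp this
      exact mem_iUnion.mpr ⟨⟨f x, i⟩, subset_closure ⟨hx, hi⟩⟩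
    obtain ⟨z, hz, hXz⟩ := (isIrreducible_iff_sUnion_isClosed.mp hX'irr)
      (Finset.image (fun j : ι => closure (X' ∩ V j.1 j.2)) Finset.univ)
      (by simp only [Finset.mem_image]; rintro z ⟨j, -, rfl⟩; exact isClosed_closure)
      (by
        intro x hx
        obtain ⟨j, hj⟩ := mem_iUnion.mp (hcover hx)
        exact ⟨closure (X' ∩ V j.1 j.2), by simp [Finset.mem_image], hj⟩)
    obtain ⟨j, -, rfl⟩ := Finset.mem_image.mp hz
    -- X' ⊆ closure (X' ∩ V j), and V j = A j \ B j
    have hXA : X' ⊆ A j.1 j.2 := by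
      refine hXz.trans ?_
      have : X' ∩ V j.1 j.2 ⊆ A j.1 j.2 := fun x hx => by
        have := hx.2; rw [hVAB j.1 j.2] at this; exact this.1
      exact (closure_mono this).trans (hA j.1 j.2).closure_subset
    refine ⟨(B j.1 j.2)ᶜ, (hB j.1 j.2).isOpen_compl, ?_, ?_⟩
    · -- nonempty: X' ∩ V j nonempty since X' nonempty and X' ⊆ its closure
      obtain ⟨x, hx⟩ := hX'irr.nonempty
      have hne : (X' ∩ V j.1 j.2).Nonempty := by
        by_contra hemp
        rw [not_nonempty_iff_eq_empty] at hemp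
        rw [hemp, closure_empty] at hXz
        exact hXz hx
      obtain ⟨x, hx1, hx2⟩ := hne
      rw [hVAB j.1 j.2] at hx2
      exact ⟨x, hx1, hx2.2⟩
    · -- constancy: X' ∩ Bᶜ ⊆ V j ⊆ f⁻¹ {j.1}
      have key : ∀ a ∈ X' ∩ (B j.1 j.2)ᶜ, f a = j.1 := by
        rintro a ⟨ha1, ha2⟩
        have : a ∈ V j.1 j.2 := by rw [hVAB j.1 j.2]; exact ⟨hXA ha1, ha2⟩
        have : a ∈ f ⁻¹' {j.1} := by rw [hfib j.1]; exact mem_iUnion.mpr ⟨j.2, this⟩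
        exact this
      intro a ha b hb
      rw [key a ha, key b hb]
  · -- generically constant → constructible fibers
    intro h
    have key : ∀ Z : Closeds X, ∀ y : Y, PaperConstructible (f ⁻¹' {y} ∩ (Z : Set X)) := by
      intro Z
      refine wellFounded_lt.induction (C := fun Z : Closeds X => ∀ y : Y, PaperConstructible (f ⁻¹' {y} ∩ (Z : Set X))) Z fun Z IH => ?_
      intro y
      rcases eq_or_ne (Z : Set X) ∅ with hZe | hZne
      · rw [hZe]; simpa using PaperConstructible.empty
      by_cases hirr : IsPreirreducible (Z : Set X)
      · -- irreducible case
        have hZirr : IsIrreducible (Z : Set X) := ⟨nonempty_iff_ne_empty.mpr hZne, hirr⟩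
        obtain ⟨U, hU, hne, hconst⟩ := h Z Z.isClosed hZirr
        obtain ⟨x₀, hx₀⟩ := hne
        set Z' : Closeds X := ⟨(Z : Set X) ∩ Uᶜ, Z.isClosed.inter hU.isClosed_compl⟩
        have hZ'lt : Z' < Z := by
          rw [lt_iff_le_and_ne]
          refine ⟨fun x hx => hx.1, ?_⟩
          intro hEq
          have : x₀ ∈ (Z' : Set X) := by rw [show (Z' : Set X) = Z from congrArg _ hEq]; exact hx₀.1
          exact this.2 hx₀.2
        have hB : PaperConstructible (f ⁻¹' {y} ∩ (Z' : Set X)) := IH Z' hZ'lt y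
        have hsplit : f ⁻¹' {y} ∩ (Z : Set X) =
            (f ⁻¹' {y} ∩ ((Z : Set X) ∩ U)) ∪ (f ⁻¹' {y} ∩ (Z' : Set X)) := by
          show _ = _ ∪ (_ ∩ (_ ∩ _))
          rw [← inter_union_distrib_left, ← inter_union_distrib_left, union_compl_self,
            inter_univ]
        have hAc : PaperConstructible (f ⁻¹' {y} ∩ ((Z : Set X) ∩ U)) := by
          rcases eq_or_ne y (f x₀) with rfl | hy
          · have heq : f ⁻¹' {f x₀} ∩ ((Z : Set X) ∩ U) = (Z : Set X) ∩ U := by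
              apply inter_eq_self_of_subset_right
              intro a ha
              exact hconst a ha x₀ hx₀
            rw [heq]
            exact PaperLocallyClosed.constructible
              ⟨Z, Uᶜ, Z.isClosed, hU.isClosed_compl, by rw [diff_eq, compl_compl]⟩
          · have heq : f ⁻¹' {y} ∩ ((Z : Set X) ∩ U) = ∅ := by
              apply eq_empty_of_forall_notMem
              rintro a ⟨ha1, ha2⟩
              exact hy (ha1.symm ▸ (hconst a ha2 x₀ hx₀))
            rw [heq]
            exact PaperConstructible.empty
        rw [hsplit]
        exact hAc.union hB
      · -- reducible case
        rw [IsPreirreducible] at hirr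
        push_neg at hirr
        obtain ⟨u, v, hu, hv, hZu, hZv, huv⟩ := hirr
        set Z₁ : Closeds X := ⟨(Z : Set X) ∩ uᶜ, Z.isClosed.inter hu.isClosed_compl⟩
        set Z₂ : Closeds X := ⟨(Z : Set X) ∩ vᶜ, Z.isClosed.inter hv.isClosed_compl⟩
        have hZ₁lt : Z₁ < Z := by
          rw [lt_iff_le_and_ne]
          refine ⟨fun x hx => hx.1, fun hEq => ?_⟩
          obtain ⟨x, hxZ, hxu⟩ := hZu
          have : x ∈ (Z₁ : Set X) := by rw [show (Z₁ : Set X) = Z from congrArg _ hEq]; exact hxZ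
          exact this.2 hxu
        have hZ₂lt : Z₂ < Z := by
          rw [lt_iff_le_and_ne]
          refine ⟨fun x hx => hx.1, fun hEq => ?_⟩
          obtain ⟨x, hxZ, hxv⟩ := hZv
          have : x ∈ (Z₂ : Set X) := by rw [show (Z₂ : Set X) = Z from congrArg _ hEq]; exact hxZ
          exact this.2 hxv
        have hZsplit : (Z : Set X) = (Z₁ : Set X) ∪ (Z₂ : Set X) := by
          ext x
          simp only [Z₁, Z₂, Closeds.coe_mk, mem_union, mem_inter_iff, mem_compl_iff]
          constructor
          · intro hx
            by_cases hxu : x ∈ u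
            · right
              exact ⟨hx, fun hxv => (not_nonempty_iff_eq_empty.mpr huv) ⟨x, hx, hxu, hxv⟩⟩
            · exact Or.inl ⟨hx, hxu⟩
          · rintro (⟨hx, -⟩ | ⟨hx, -⟩) <;> exact hx
        rw [hZsplit, inter_union_distrib_left]
        exact (IH Z₁ hZ₁lt y).union (IH Z₂ hZ₂lt y)
    intro y
    have := key ⊤ y
    simpa using this
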